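/- View ℂⁿ as a real vector space ℝ²ⁿ with complex structure J (multiplication by i). For a real subspace L ⊆ ℂⁿ, the intersection L ∩ J(L) is a complex subspace of ℂⁿ. Two real subspaces L, L′ ⊆ ℂⁿ of the same real dimension k lie in the same orbit of GL(n, ℂ) (acting ℂ-linearly, hence ℝ-linearly) if and only if dim_ℂ(L ∩ J(L)) = dim_ℂ(L′ ∩ J(L′)). -/

import Mathlib

open Module Submodule Set

section Aux

/-- Map one linearly independent family to another by an automorphism. -/
lemma exists_equiv_map {K V : Type*} [Field K] [AddCommGroup V] [Module K V]
    [FiniteDimensional K V] {ι : Type*} [Fintype ι] {v v' : ι → V}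
    (hv : LinearIndependent K v) (hv' : LinearIndependent K v') :
    ∃ g : V ≃ₗ[K] V, ∀ i, g (v i) = v' i := by
  set p := span K (range v)
  set p' := span K (range v')
  obtain ⟨q, hq⟩ := Submodule.exists_isCompl p
  obtain ⟨q', hq'⟩ := Submodule.exists_isCompl p'
  have hfr : finrank K q = finrank K q' := by
    have h1 := Submodule.finrank_add_eq_of_isCompl hq
    have h2 := Submodule.finrank_add_eq_of_isCompl hq'
    have h3 : finrank K p = finrank K p' := by
      rw [finrank_span_eq_card hv, finrank_span_eq_card hv']
    omega
  let ep : p ≃ₗ[K] p' := (Basis.span hv).equiv (Basis.span hv') (Equiv.refl ι)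
  let eq' : q ≃ₗ[K] q' := LinearEquiv.ofFinrankEq _ _ hfr
  refine ⟨((Submodule.prodEquivOfIsCompl p q hq).symm.trans
    ((ep.prodCongr eq').trans (Submodule.prodEquivOfIsCompl p' q' hq'))), fun i => ?_⟩
  have hmem : v i ∈ p := subset_span (mem_range_self i)
  have h0 : (Submodule.prodEquivOfIsCompl p q hq).symm (v i) = (⟨v i, hmem⟩, 0) := by
    rw [LinearEquiv.symm_apply_eq, Submodule.coe_prodEquivOfIsCompl']
    simp
  simp only [LinearEquiv.trans_apply, h0, LinearEquiv.prodCongr_apply, Submodule.coe_prodEquivOfIsCompl']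
  have : ep ⟨v i, hmem⟩ = ⟨v' i, subset_span (mem_range_self i)⟩ := by
    have hb : (⟨v i, hmem⟩ : p) = Basis.span hv i := by
      ext; exact congrArg Subtype.val (Basis.span_apply hv i).symm
    rw [hb]
    simp only [ep, Basis.equiv_apply, Equiv.refl_apply]
    ext; exact congrArg Subtype.val (Basis.span_apply hv' i)
  rw [this]
  simp

end Aux

/-- Multiplication by `i` on `ℂⁿ`, viewed as a real-linear map. -/
noncomputable def Jmap (n : ℕ) : (Fin n → ℂ) →ₗ[ℝ] (Fin n → ℂ) :=
  Complex.I • (LinearMap.id : (Fin n → ℂ) →ₗ[ℝ] (Fin n → ℂ))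

lemma Jmap_apply (n : ℕ) (x : Fin n → ℂ) : Jmap n x = Complex.I • x := rfl

lemma csmul_decomp (c : ℂ) {n : ℕ} (x : Fin n → ℂ) :
    c • x = c.re • x + c.im • (Complex.I • x) := by
  funext i
  simp only [Pi.add_apply, Pi.smul_apply, Complex.real_smul, smul_eq_mul]
  conv_lhs => rw [← Complex.re_add_im c]
  ring

/-- `L ∩ J L` as a complex subspace. -/
noncomputable def cpart (n : ℕ) (L : Submodule ℝ (Fin n → ℂ)) : Submodule ℂ (Fin n → ℂ) where
  carrier := ↑(L ⊓ L.map (Jmap n))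
  zero_mem' := (L ⊓ L.map (Jmap n)).zero_mem
  add_mem' ha hb := (L ⊓ L.map (Jmap n)).add_mem ha hb
  smul_mem' := by
    intro c x hx
    have hsmulI : ∀ y : Fin n → ℂ, y ∈ L ⊓ L.map (Jmap n) →
        Complex.I • y ∈ L ⊓ L.map (Jmap n) := by
      rintro y ⟨hyL, z, hzL, hzy⟩
      constructor
      · rw [Jmap_apply] at hzy
        have : Complex.I • y = -z := by
          rw [← hzy, smul_smul, Complex.I_mul_I, neg_one_smul]
        rw [this]
        exact L.neg_mem hzL
      · exact ⟨y, hyL, rfl⟩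
    have hx' : x ∈ L ⊓ L.map (Jmap n) := hx
    have hIx := hsmulI x hx'
    have : c • x = c.re • x + c.im • (Complex.I • x) := csmul_decomp c x
    rw [this]
    exact (L ⊓ L.map (Jmap n)).add_mem ((L ⊓ L.map (Jmap n)).smul_mem _ hx')
      ((L ⊓ L.map (Jmap n)).smul_mem _ hIx)

lemma cpart_coe (n : ℕ) (L : Submodule ℝ (Fin n → ℂ)) :
    ((cpart n L : Submodule ℂ (Fin n → ℂ)) : Set (Fin n → ℂ)) = ↑(L ⊓ L.map (Jmap n)) := rfl

lemma cpart_restrict (n : ℕ) (L : Submodule ℝ (Fin n → ℂ)) :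
    (cpart n L).restrictScalars ℝ = L ⊓ L.map (Jmap n) := rfl

lemma mem_cpart (n : ℕ) (L : Submodule ℝ (Fin n → ℂ)) (x : Fin n → ℂ) :
    x ∈ cpart n L ↔ x ∈ L ⊓ L.map (Jmap n) := Iff.rfl

lemma finrank_inter (n : ℕ) (L : Submodule ℝ (Fin n → ℂ)) :
    finrank ℝ ↥(L ⊓ L.map (Jmap n)) = 2 * finrank ℂ ↥(cpart n L) := by
  rw [← cpart_restrict n L]
  have h1 : finrank ℝ ↥(Submodule.restrictScalars ℝ (cpart n L)) = finrank ℝ ↥(cpart n L) :=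
    LinearEquiv.finrank_eq ((Submodule.restrictScalarsEquiv ℝ ℂ _ (cpart n L)).restrictScalars ℝ)
  rw [h1, ← Complex.finrank_real_complex]
  exact (Module.finrank_mul_finrank ℝ ℂ ↥(cpart n L)).symm

lemma decomp (n : ℕ) (L : Submodule ℝ (Fin n → ℂ)) :
    ∃ (m r : ℕ) (e : Fin m → (Fin n → ℂ)) (u : Fin r → (Fin n → ℂ)),
      LinearIndependent ℂ (Sum.elim e u) ∧
      finrank ℝ ↥(L ⊓ L.map (Jmap n)) = 2 * m ∧
      finrank ℝ ↥L = 2 * m + r ∧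
      L = span ℝ (range (Sum.elim (Sum.elim e (fun i => Complex.I • e i)) u)) := by
  classical
  set V := (Fin n → ℂ)
  set W := cpart n L with hW
  set Wr := L ⊓ L.map (Jmap n) with hWr
  have hWrW : ∀ x : V, x ∈ Wr ↔ x ∈ W := fun x => Iff.rfl
  have hWrL : Wr ≤ L := inf_le_left
  set m := finrank ℂ ↥W with hm
  let bW : Basis (Fin m) ℂ ↥W := finBasis ℂ ↥W
  set e : Fin m → V := fun i => ↑(bW i) with he
  -- complement of Wr inside L
  obtain ⟨q, hq⟩ := Submodule.exists_isCompl (Wr.comap L.subtype)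
  set U := q.map L.subtype with hU
  have hUL : U ≤ L := Submodule.map_subtype_le L q
  have hdisj : U ⊓ Wr = ⊥ := by
    rw [eq_bot_iff]
    rintro x ⟨hxU, hxWr⟩
    obtain ⟨y, hyq, rfl⟩ := hxU
    have hyp : y ∈ Wr.comap L.subtype := hxWr
    have : y ∈ Wr.comap L.subtype ⊓ q := ⟨hyp, hyq⟩
    rw [hq.inf_eq_bot, Submodule.mem_bot] at this
    simp [this]
  have hsup : Wr ⊔ U = L := by
    have h1 : Submodule.map L.subtype (Wr.comap L.subtype ⊔ q) = L := by
      rw [hq.sup_eq_top, Submodule.map_subtype_top]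
    rw [Submodule.map_sup, Submodule.map_comap_subtype, inf_eq_right.2 hWrL] at h1
    exact h1
  set r := finrank ℝ ↥U with hr
  let bU : Basis (Fin r) ℝ ↥U := finBasis ℝ ↥U
  set u : Fin r → V := fun j => ↑(bU j) with hu
  have huU : ∀ j, u j ∈ U := fun j => (bU j).2
  have heW : ∀ i, e i ∈ W := fun i => (bW i).2
  -- dimension facts
  have h2m : finrank ℝ ↥Wr = 2 * m := finrank_inter n L
  have hcount : finrank ℝ ↥L = 2 * m + r := by
    have h := Submodule.finrank_sup_add_finrank_inf_eq U Wr
    have hsup' : U ⊔ Wr = L := by rw [sup_comm]; exact hsup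
    rw [hsup', hdisj] at h
    simp only [finrank_bot] at h
    omega
  -- span of Wr
  have hspanWr : Wr = span ℝ (range (Sum.elim e (fun i => Complex.I • e i))) := by
    apply le_antisymm
    · intro x hx
      have hxW : x ∈ W := (hWrW x).1 hx
      have hrepr := bW.sum_repr ⟨x, hxW⟩
      have hx' : x = ∑ i, (bW.repr ⟨x, hxW⟩ i) • e i := by
        have := congrArg (Subtype.val) hrepr
        simp only [AddSubmonoidClass.coe_finset_sum, SetLike.val_smul] at this
        exact this.symm
      rw [hx']
      apply Submodule.sum_mem
      intro i _
      rw [csmul_decomp]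
      apply Submodule.add_mem
      · exact Submodule.smul_mem _ _ (subset_span ⟨Sum.inl i, rfl⟩)
      · exact Submodule.smul_mem _ _ (subset_span ⟨Sum.inr i, rfl⟩)
    · rw [span_le]
      rintro x ⟨i, rfl⟩
      cases i with
      | inl i => exact (hWrW _).2 (heW i)
      | inr i => exact (hWrW _).2 (W.smul_mem Complex.I (heW i))
  -- span of U
  have hspanU : U = span ℝ (range u) := by
    have h1 : Submodule.map U.subtype (span ℝ (range bU)) = U := by
      rw [bU.span_eq, Submodule.map_subtype_top]
    rw [← h1, Submodule.map_span, ← Set.range_comp]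
    rfl
  -- full span
  have hspanL : L = span ℝ (range (Sum.elim (Sum.elim e (fun i => Complex.I • e i)) u)) := by
    rw [Set.Sum.elim_range, span_union, ← hspanWr, ← hspanU, hsup]
  -- W as complex span of e
  have hspanW : (W : Submodule ℂ V) = span ℂ (range e) := by
    have h1 : Submodule.map W.subtype (span ℂ (range bW)) = W := by
      rw [bW.span_eq, Submodule.map_subtype_top]
    rw [← h1, Submodule.map_span, ← Set.range_comp]
    rfl
  -- key fact: U ∩ (anything complex in L) interaction
  have hkey : ∀ xa xb : V, xa ∈ U → xb ∈ U → xa + Complex.I • xb ∈ W →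
      xa = 0 ∧ xb = 0 := by
    intro xa xb hxa hxb hsum
    have hxaL : xa ∈ L := hUL hxa
    have hxbL : xb ∈ L := hUL hxb
    have hsumWr : xa + Complex.I • xb ∈ Wr := (hWrW _).2 hsum
    have hIxbL : Complex.I • xb ∈ L := by
      have : Complex.I • xb = (xa + Complex.I • xb) - xa := by abel
      rw [this]
      exact L.sub_mem (hWrL hsumWr) hxaL
    have hIxbWr : Complex.I • xb ∈ Wr := ⟨hIxbL, xb, hxbL, rfl⟩
    have hxbW : xb ∈ W := by
      have := W.smul_mem (-Complex.I) ((hWrW _).1 hIxbWr)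
      rwa [smul_smul, neg_mul, Complex.I_mul_I, neg_neg, one_smul] at this
    have hxb0 : xb = 0 := by
      have : xb ∈ U ⊓ Wr := ⟨hxb, (hWrW _).2 hxbW⟩
      rwa [hdisj, Submodule.mem_bot] at this
    subst hxb0
    have hxaWr : xa ∈ Wr := by simpa using hsumWr
    have : xa ∈ U ⊓ Wr := ⟨hxa, hxaWr⟩
    rw [hdisj, Submodule.mem_bot] at this
    exact ⟨this, rfl⟩
  -- independence of e over ℂ
  have he_ind : LinearIndependent ℂ e :=
    bW.linearIndependent.map' W.subtype (Submodule.ker_subtype W)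
  -- independence of u over ℂ
  have hu_ind : LinearIndependent ℂ u := by
    rw [Fintype.linearIndependent_iff]
    intro g hg i
    have hdecomp : ∑ j, g j • u j
        = (∑ j, (g j).re • u j) + Complex.I • (∑ j, (g j).im • u j) := by
      rw [Finset.smul_sum, ← Finset.sum_add_distrib]
      apply Finset.sum_congr rfl
      intro j _
      rw [csmul_decomp (g j) (u j), smul_comm]
    have hxa : (∑ j, (g j).re • u j) ∈ U := Submodule.sum_mem _ fun j _ => U.smul_mem _ (huU j)
    have hxb : (∑ j, (g j).im • u j) ∈ U := Submodule.sum_mem _ fun j _ => U.smul_mem _ (huU j)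
    have h0 : (∑ j, (g j).re • u j) + Complex.I • (∑ j, (g j).im • u j) ∈ W := by
      rw [← hdecomp, hg]; exact W.zero_mem
    obtain ⟨ha0, hb0⟩ := hkey _ _ hxa hxb h0
    have hure : ∀ j, (g j).re = 0 := by
      have := Fintype.linearIndependent_iff.1
        (bU.linearIndependent.map' U.subtype (Submodule.ker_subtype U)) (fun j => (g j).re) ha0
      exact this
    have huim : ∀ j, (g j).im = 0 := by
      have := Fintype.linearIndependent_iff.1
        (bU.linearIndependent.map' U.subtype (Submodule.ker_subtype U)) (fun j => (g j).im) hb0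
      exact this
    exact Complex.ext (hure i) (huim i)
  -- disjointness over ℂ
  have hdisjC : Disjoint (span ℂ (range e)) (span ℂ (range u)) := by
    rw [disjoint_iff, eq_bot_iff]
    rintro x ⟨hxW, hxU⟩
    rw [← hspanW] at hxW
    obtain ⟨c, hc⟩ := (mem_span_range_iff_exists_fun ℂ).1 hxU
    have hdecomp : x = (∑ j, (c j).re • u j) + Complex.I • (∑ j, (c j).im • u j) := by
      rw [← hc, Finset.smul_sum, ← Finset.sum_add_distrib]
      apply Finset.sum_congr rfl
      intro j _
      rw [csmul_decomp (c j) (u j), smul_comm]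
    have hxa : (∑ j, (c j).re • u j) ∈ U := Submodule.sum_mem _ fun j _ => U.smul_mem _ (huU j)
    have hxb : (∑ j, (c j).im • u j) ∈ U := Submodule.sum_mem _ fun j _ => U.smul_mem _ (huU j)
    obtain ⟨ha0, hb0⟩ := hkey _ _ hxa hxb (hdecomp ▸ hxW)
    rw [Submodule.mem_bot, hdecomp, ha0, hb0]
    simp
  exact ⟨m, r, e, u, he_ind.sum_type hu_ind hdisjC, h2m, hcount, hspanL⟩

/-- For a real subspace `L ⊆ ℂⁿ`, the intersection `L ∩ J(L)` is a complex subspace; and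
two real subspaces of the same real dimension `k` lie in the same `GL(n,ℂ)`-orbit iff
`dim_ℂ (L ∩ JL) = dim_ℂ (L' ∩ JL')` (equivalently, the real dimensions agree). -/
theorem stmt17 (n k : ℕ) :
    (∀ L : Submodule ℝ (Fin n → ℂ), ∃ W : Submodule ℂ (Fin n → ℂ),
        (W : Set (Fin n → ℂ)) = ↑(L ⊓ L.map (Jmap n))) ∧
    (∀ L L' : Submodule ℝ (Fin n → ℂ),
      Module.finrank ℝ L = k → Module.finrank ℝ L' = k →
      ((∃ g : (Fin n → ℂ) ≃ₗ[ℂ] (Fin n → ℂ),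
          Submodule.map ((g : (Fin n → ℂ) →ₗ[ℂ] (Fin n → ℂ)).restrictScalars ℝ) L = L') ↔
        Module.finrank ℝ ↥(L ⊓ L.map (Jmap n)) =
          Module.finrank ℝ ↥(L' ⊓ L'.map (Jmap n)))) := by
  constructor
  · intro L
    exact ⟨cpart n L, rfl⟩
  · intro L L' hL hL'
    constructor
    · rintro ⟨g, hg⟩
      set f := ((g : (Fin n → ℂ) →ₗ[ℂ] (Fin n → ℂ)).restrictScalars ℝ) with hf
      have hinj : Function.Injective f := fun x y h => g.injective h
      have hcomm : f.comp (Jmap n) = (Jmap n).comp f := by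
        ext x
        simp only [LinearMap.comp_apply, Jmap_apply, hf, LinearMap.coe_restrictScalars,
          LinearEquiv.coe_coe, map_smul]
      have hmapJ : Submodule.map f (L.map (Jmap n)) = L'.map (Jmap n) := by
        rw [← Submodule.map_comp, hcomm, Submodule.map_comp, hg]
      have key : Submodule.map f (L ⊓ L.map (Jmap n)) = L' ⊓ L'.map (Jmap n) := by
        rw [Submodule.map_inf f hinj, hg, hmapJ]
      have hfin := LinearEquiv.finrank_map_eq (g.restrictScalars ℝ) (L ⊓ L.map (Jmap n))
      have hsame : Submodule.map ((g.restrictScalars ℝ : (Fin n → ℂ) ≃ₗ[ℝ] (Fin n → ℂ)) :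
          (Fin n → ℂ) →ₗ[ℝ] (Fin n → ℂ)) (L ⊓ L.map (Jmap n)) = L' ⊓ L'.map (Jmap n) := key
      rw [hsame] at hfin
      exact hfin.symm
    · intro hrk
      obtain ⟨m, r, e, u, hind, h2m, hcnt, hspan⟩ := decomp n L
      obtain ⟨m', r', e', u', hind', h2m', hcnt', hspan'⟩ := decomp n L'
      have hmm : m' = m := by rw [hrk, h2m'] at h2m; omega
      subst hmm
      have hrr : r' = r := by rw [hL] at hcnt; rw [hL'] at hcnt'; omega
      subst hrr
      obtain ⟨g, hg⟩ := exists_equiv_map hind hind'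
      refine ⟨g, ?_⟩
      have hcomp : (⇑((g : (Fin n → ℂ) →ₗ[ℂ] (Fin n → ℂ)).restrictScalars ℝ) ∘
          (Sum.elim (Sum.elim e fun i => Complex.I • e i) u)) =
          Sum.elim (Sum.elim e' fun i => Complex.I • e' i) u' := by
        funext x
        rcases x with (i | i) | j
        · exact hg (Sum.inl i)
        · show g (Complex.I • e i) = Complex.I • e' i
          rw [map_smul]
          exact congrArg _ (hg (Sum.inl i))
        · exact hg (Sum.inr j)
      rw [hspan, hspan', Submodule.map_span, ← Set.range_comp, hcomp]
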